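/- In the Laurent polynomial ring ℤ[t,t⁻¹,x,x⁻¹], the elements −t³x + t³ + t²x − 2tx² − t² + x² and t² − tx + x are relatively prime. -/

import Mathlib

open LaurentPolynomial

/-- Evaluation of a Laurent polynomial at `1`: the algebra map sending `T n ↦ 1`. -/
noncomputable def epsHom (S : Type*) [CommSemiring S] : LaurentPolynomial S →ₐ[S] S :=
  AddMonoidAlgebra.lift S S ℤ 1

@[simp] lemma epsHom_single {S : Type*} [CommSemiring S] (n : ℤ) (a : S) :
    epsHom S (AddMonoidAlgebra.single n a : LaurentPolynomial S) = a := by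
  classical
  have : (AddMonoidAlgebra.single n a : LaurentPolynomial S) = AddMonoidAlgebra.single n a := rfl
  rw [this, epsHom, AddMonoidAlgebra.lift_single]
  simp

@[simp] lemma epsHom_T {S : Type*} [CommSemiring S] (n : ℤ) :
    epsHom S (T n : LaurentPolynomial S) = 1 := epsHom_single n 1

@[simp] lemma epsHom_C {S : Type*} [CommSemiring S] (a : S) :
    epsHom S (C a : LaurentPolynomial S) = a := epsHom_single 0 a

/-- In `S[X]` over a domain, a divisor of `C a * X ^ N` (with `a ≠ 0`) is a monomial. -/
lemma poly_dvd_monomial {S : Type*} [CommRing S] [IsDomain S] {a : S} (ha : a ≠ 0)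
    {N : ℕ} {D : Polynomial S} (hD : D ∣ Polynomial.C a * Polynomial.X ^ N) :
    ∃ (c : S) (k : ℕ), D = Polynomial.C c * Polynomial.X ^ k := by
  classical
  obtain ⟨E, hE⟩ := hD
  have hmono : Polynomial.C a * Polynomial.X ^ N ≠ 0 :=
    mul_ne_zero (Polynomial.C_ne_zero.2 ha) (pow_ne_zero _ Polynomial.X_ne_zero)
  have hD0 : D ≠ 0 := by rintro rfl; rw [zero_mul] at hE; exact hmono hE
  have hE0 : E ≠ 0 := by rintro rfl; rw [mul_zero] at hE; exact hmono hE
  have hdeg : D.natDegree + E.natDegree = N := by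
    have := (Polynomial.natDegree_mul hD0 hE0).symm
    rw [← hE, Polynomial.natDegree_C_mul_X_pow N a ha] at this
    omega
  have htr : D.natTrailingDegree + E.natTrailingDegree = N := by
    have := (Polynomial.natTrailingDegree_mul hD0 hE0).symm
    rw [← hE, Polynomial.C_mul_X_pow_eq_monomial,
      Polynomial.natTrailingDegree_monomial ha] at this
    omega
  have h1 := Polynomial.natTrailingDegree_le_natDegree D
  have h2 := Polynomial.natTrailingDegree_le_natDegree E
  have hk : D.natTrailingDegree = D.natDegree := by omega
  refine ⟨D.coeff D.natDegree, D.natDegree, ?_⟩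
  ext i
  rw [Polynomial.coeff_C_mul, Polynomial.coeff_X_pow]
  rcases lt_trichotomy i D.natDegree with h | h | h
  · rw [if_neg h.ne, mul_zero, Polynomial.coeff_eq_zero_of_lt_natTrailingDegree]
    omega
  · subst h; simp
  · rw [if_neg h.ne', mul_zero, Polynomial.coeff_eq_zero_of_natDegree_lt h]

instance {S : Type*} [CommRing S] [IsDomain S] : IsDomain (LaurentPolynomial S) :=
  NoZeroDivisors.to_isDomain _

/-- Over a domain, a divisor of a nonzero constant Laurent polynomial is a monomial. -/
lemma laurent_dvd_C {S : Type*} [CommRing S] [IsDomain S] {a : S} (ha : a ≠ 0)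
    {d : LaurentPolynomial S} (hd : d ∣ C a) :
    ∃ (c : S) (k : ℤ), d = C c * T k := by
  obtain ⟨e, he⟩ := hd
  obtain ⟨n, D, hD⟩ := exists_T_pow d
  obtain ⟨m, E, hE⟩ := exists_T_pow e
  have key : D * E = Polynomial.C a * Polynomial.X ^ (n + m) := by
    apply Polynomial.toLaurent_injective
    rw [map_mul, hD, hE, map_mul, Polynomial.toLaurent_C, Polynomial.toLaurent_X_pow]
    push_cast
    rw [T_add, mul_mul_mul_comm, ← he]
  obtain ⟨c, k, hck⟩ := poly_dvd_monomial ha ⟨E, key.symm⟩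
  refine ⟨c, (k : ℤ) - n, ?_⟩
  have hDL : Polynomial.toLaurent D = C c * T k := by
    rw [hck, map_mul, Polynomial.toLaurent_C, Polynomial.toLaurent_X_pow]
  rw [hDL] at hD
  have := congrArg (· * T (-n)) hD
  simp only [mul_T_assoc] at this
  rw [add_neg_cancel, T_zero, mul_one] at this
  rw [← this, sub_eq_add_neg]

open LaurentPolynomial in
/-- In the two-variable Laurent polynomial ring `ℤ[t,t⁻¹,x,x⁻¹]` (realized as
`ℤ[t,t⁻¹][x,x⁻¹]`, with `t = C (T 1)` and `x = T 1`), the elements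
`−t³x + t³ + t²x − 2tx² − t² + x²` and `t² − tx + x` are relatively prime. -/
theorem stmt10 :
    letI t : LaurentPolynomial (LaurentPolynomial ℤ) := LaurentPolynomial.C (T 1)
    letI x : LaurentPolynomial (LaurentPolynomial ℤ) := T 1
    IsRelPrime (-t ^ 3 * x + t ^ 3 + t ^ 2 * x - 2 * t * x ^ 2 - t ^ 2 + x ^ 2)
      (t ^ 2 - t * x + x) := by
  intro d hdA hdB
  set τ : LaurentPolynomial ℤ := T 1 with hτ
  set t : LaurentPolynomial (LaurentPolynomial ℤ) := C τ with ht
  set x : LaurentPolynomial (LaurentPolynomial ℤ) := T 1 with hx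
  set A : LaurentPolynomial (LaurentPolynomial ℤ) :=
    -t ^ 3 * x + t ^ 3 + t ^ 2 * x - 2 * t * x ^ 2 - t ^ 2 + x ^ 2 with hA
  set B : LaurentPolynomial (LaurentPolynomial ℤ) := t ^ 2 - t * x + x with hB
  -- the eliminant in `t` only
  set g₀ : LaurentPolynomial ℤ := -τ ^ 6 + τ ^ 5 - 3 * τ ^ 4 + 3 * τ ^ 3 - τ ^ 2 with hg₀
  have hCg₀ : (C g₀ : LaurentPolynomial (LaurentPolynomial ℤ))
      = (1 - t) ^ 2 * A - ((1 - t) * (1 - 2 * t) * x + t ^ 4) * B := by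
    rw [hg₀]
    push_cast [map_add, map_sub, map_neg, map_mul, map_pow, map_ofNat]
    rw [hA, hB]
    ring
  have hdg : d ∣ C g₀ := by
    rw [hCg₀]
    exact dvd_sub (Dvd.dvd.mul_left hdA _) (Dvd.dvd.mul_left hdB _)
  -- `g₀ ≠ 0` since it evaluates to `-1` at `T ↦ 1`
  have hg₀eval : epsHom ℤ g₀ = -1 := by
    rw [hg₀, hτ]
    simp only [map_add, map_sub, map_neg, map_mul, map_pow, map_ofNat, epsHom_T]
    norm_num
  have hg₀ne : g₀ ≠ 0 := by
    intro h
    rw [h, map_zero] at hg₀eval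
    norm_num at hg₀eval
  obtain ⟨d₀, k, hd₀⟩ := laurent_dvd_C hg₀ne hdg
  -- `d₀` is the image of `d` under evaluation at `x ↦ 1`
  have hεd : epsHom (LaurentPolynomial ℤ) d = d₀ := by
    rw [hd₀, map_mul, epsHom_C, epsHom_T, mul_one]
  have hεt : epsHom (LaurentPolynomial ℤ) t = τ := by rw [ht, epsHom_C]
  have hεx : epsHom (LaurentPolynomial ℤ) x = 1 := by rw [hx, epsHom_T]
  have hdA' : d₀ ∣ 1 - 2 * τ := by
    have := map_dvd (epsHom (LaurentPolynomial ℤ)) hdA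
    rw [hεd, hA] at this
    simp only [map_add, map_sub, map_neg, map_mul, map_pow, map_ofNat, hεt, hεx] at this
    convert this using 1
    ring
  have hdB' : d₀ ∣ τ ^ 2 - τ + 1 := by
    have := map_dvd (epsHom (LaurentPolynomial ℤ)) hdB
    rw [hεd, hB] at this
    simp only [map_add, map_sub, map_mul, map_pow, hεt, hεx] at this
    convert this using 1
    ring
  -- hence `d₀` divides the constant `3`
  have hd3 : d₀ ∣ (C 3 : LaurentPolynomial ℤ) := by
    have : (C 3 : LaurentPolynomial ℤ) = 4 * (τ ^ 2 - τ + 1) - (1 - 2 * τ) * (1 - 2 * τ) := by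
      push_cast [map_ofNat]
      ring
    rw [this]
    exact dvd_sub (Dvd.dvd.mul_left hdB' _) (hdA'.mul_left _)
  obtain ⟨m, j, hm⟩ := laurent_dvd_C (by norm_num : (3 : ℤ) ≠ 0) hd3
  -- `d₀` divides `g₀`, so `m` divides `-1`
  have hd₀g : d₀ ∣ g₀ := by
    have := map_dvd (epsHom (LaurentPolynomial ℤ)) hdg
    rwa [hεd, epsHom_C] at this
  have hmg : m ∣ (-1 : ℤ) := by
    have := map_dvd (epsHom ℤ) hd₀g
    rw [hm, map_mul, epsHom_C, epsHom_T, mul_one, hg₀eval] at this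
    exact this
  have hmu : IsUnit m := isUnit_of_dvd_unit hmg (IsUnit.neg isUnit_one)
  have hd₀u : IsUnit d₀ := by
    rw [hm]
    exact (hmu.map (C : ℤ →+* LaurentPolynomial ℤ)).mul (isUnit_T j)
  rw [hd₀]
  exact (hd₀u.map (C : LaurentPolynomial ℤ →+* LaurentPolynomial (LaurentPolynomial ℤ))).mul
    (isUnit_T k)
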